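/- Let X be a finite set, C a choice function on X, and A a binary relation on X. Define the (GC)-modification C^(GC) by C^(GC)(S) = C(S) ∪ {x ∈ S : x ∈ C({x,y}) for all y ∈ S}. Then C^(GC) is again a choice function, and: if C satisfies (wIm_A) then C^(GC) satisfies (wIm_A), and if C satisfies (Im_A) then C^(GC) satisfies (Im_A). -/

import Mathlib

namespace SC

variable {X : Type*}

/-- `tr_S(A)`: the reflexive-transitive hull of the restriction of `A` to `S`. -/
def trS (S : Set X) (A : X → X → Prop) : X → X → Prop :=
  Relation.ReflTransGen (fun a b => a ∈ S ∧ b ∈ S ∧ A a b)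

/-- `C` is a choice function: it assigns to each nonempty `S` a nonempty subset of `S`. -/
def IsChoice (C : Set X → Set X) : Prop :=
  ∀ S : Set X, S.Nonempty → (C S).Nonempty ∧ C S ⊆ S

/-- Condition (wIm_A): weak immunity from `A`-arguments. -/
def wIm (C : Set X → Set X) (A : X → X → Prop) : Prop :=
  ∀ S : Set X, S.Nonempty → ∀ x ∈ C S, ∀ y ∈ S, y ≠ x → A y x →
    ∃ z ∈ S, z ≠ y ∧ A z y

/-- Condition (Im_A): immunity from `A`-arguments. -/
def Im (C : Set X → Set X) (A : X → X → Prop) : Prop :=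
  ∀ S : Set X, S.Nonempty → ∀ x ∈ C S, ∀ y ∈ S, A y x → trS S A x y

/-- The (GC)-modification `C^(GC)` of a choice function `C`:
`C^(GC)(S) = C(S) ∪ {x ∈ S : x ∈ C({x,y}) for all y ∈ S}`. -/
def Cgc (C : Set X → Set X) (S : Set X) : Set X :=
  C S ∪ {x ∈ S | ∀ y ∈ S, x ∈ C {x, y}}

end SC

open SC in
/-- the (GC)-modification of a choice function is a choice function and
preserves (wIm_A) and (Im_A). -/
theorem stmt7 {X : Type*} [Fintype X] (C : Set X → Set X) (A : X → X → Prop)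
    (hC : IsChoice C) :
    IsChoice (Cgc C) ∧ (wIm C A → wIm (Cgc C) A) ∧ (Im C A → Im (Cgc C) A) := by
  refine ⟨?_, ?_, ?_⟩
  · intro S hS
    obtain ⟨hne, hsub⟩ := hC S hS
    exact ⟨hne.mono Set.subset_union_left,
      Set.union_subset hsub (fun x hx => hx.1)⟩
  · intro hw S hS x hx y hy hyx hAyx
    rcases hx with hx | ⟨hxS, hxall⟩
    · exact hw S hS x hx y hy hyx hAyx
    · have hx2 : x ∈ C {x, y} := hxall y hy
      have h2 : ({x, y} : Set X).Nonempty := ⟨x, Or.inl rfl⟩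
      obtain ⟨z, hz, hzy, hAzy⟩ := hw {x, y} h2 x hx2 y (Or.inr rfl) hyx hAyx
      rcases hz with rfl | rfl
      · exact ⟨z, hxS, hzy, hAzy⟩
      · exact absurd rfl hzy
  · intro him S hS x hx y hy hAyx
    rcases hx with hx | ⟨hxS, hxall⟩
    · exact him S hS x hx y hy hAyx
    · have hx2 : x ∈ C {x, y} := hxall y hy
      have h2 : ({x, y} : Set X).Nonempty := ⟨x, Or.inl rfl⟩
      have := him {x, y} h2 x hx2 y (Or.inr rfl) hAyx
      refine Relation.ReflTransGen.mono ?_ x y this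
      rintro a b ⟨ha, hb, hab⟩
      have ha' : a ∈ S := by rcases ha with rfl | rfl <;> assumption
      have hb' : b ∈ S := by rcases hb with rfl | rfl <;> assumption
      exact ⟨ha', hb', hab⟩
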